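/- Let V ⊆ F_2^n be a spanning binary linear code of dimension d. Then the sum of |v|^2 over all words v in V equals 2^{d-1}(a_2^* + n(n+1)/2), where a_2^* is the number of weight-2 words in the dual code V*. -/

import Mathlib

open Finset

/-- Hamming weight of a word over `ZMod 2`. -/
def wt {ι : Type*} [Fintype ι] (v : ι → ZMod 2) : ℕ :=
  (Finset.univ.filter fun i => v i ≠ 0).card

/-- The dual code: annihilator under the standard scalar product. -/
def dualCode {n : ℕ} (V : Submodule (ZMod 2) (Fin n → ZMod 2)) :
    Submodule (ZMod 2) (Fin n → ZMod 2) where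
  carrier := {w | ∀ v ∈ V, ∑ i, v i * w i = 0}
  add_mem' := by
    intro a b ha hb v hv
    simp only [Pi.add_apply, mul_add, Finset.sum_add_distrib, ha v hv, hb v hv, add_zero]
  zero_mem' := by intro v hv; simp
  smul_mem' := by
    intro c a ha v hv
    have h := ha v hv
    calc ∑ i, v i * (c • a) i = c * ∑ i, v i * a i := by
          simp [Finset.mul_sum, mul_left_comm]
      _ = 0 := by rw [h, mul_zero]

/-- A code is spanning if the union of supports of its words is everything. -/
def Spanning {n : ℕ} (V : Submodule (ZMod 2) (Fin n → ZMod 2)) : Prop :=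
  ∀ i : Fin n, ∃ v ∈ V, v i ≠ 0

lemma zmod2_cases : ∀ z : ZMod 2, z = 0 ∨ z = 1 := by decide

lemma ite_mul_ite' (A B : Prop) [Decidable A] [Decidable B] :
    (if A then (1:ℕ) else 0) * (if B then 1 else 0) = if A ∧ B then 1 else 0 := by
  split_ifs with h1 h2 h3 <;> simp_all

lemma pow_helper {k t d : ℕ} (h : k * 2 ^ t = 2 ^ d) : t ≤ d ∧ k = 2 ^ (d - t) := by
  have hk : k ∣ 2 ^ d := ⟨2 ^ t, h.symm⟩
  obtain ⟨s, hs, rfl⟩ := (Nat.dvd_prime_pow Nat.prime_two).1 hk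
  rw [← pow_add] at h
  have hst := Nat.pow_right_injective (le_refl 2) h
  constructor
  · omega
  · congr 1; omega

lemma fiber_card {M W : Type*} [AddCommGroup M] [Module (ZMod 2) M] [Fintype M] [DecidableEq M]
    [AddCommGroup W] [Module (ZMod 2) W] [Fintype W] [DecidableEq W]
    (L : M →ₗ[ZMod 2] W) (hs : Function.Surjective L) (w : W) :
    (univ.filter fun v => L v = w).card * Fintype.card W = Fintype.card M := by
  have key : ∀ w1 w2 : W, (univ.filter fun v => L v = w1).card
      = (univ.filter fun v => L v = w2).card := by
    intro w1 w2
    obtain ⟨a, ha⟩ := hs w1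
    obtain ⟨b, hb⟩ := hs w2
    apply Finset.card_bij' (fun v _ => v - a + b) (fun v _ => v - b + a)
    · intro v hv
      simp only [mem_filter, mem_univ, true_and] at hv ⊢
      simp [map_add, map_sub, hv, ha, hb]
    · intro v hv
      simp only [mem_filter, mem_univ, true_and] at hv ⊢
      simp [map_add, map_sub, hv, ha, hb]
    · intro v _; abel
    · intro v _; abel
  have h1 : Fintype.card M = ∑ w' : W, (univ.filter fun v => L v = w').card := by
    rw [← Finset.card_univ]
    exact Finset.card_eq_sum_card_fiberwise (fun v _ => Finset.mem_univ (L v))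
  rw [h1, Finset.sum_congr rfl (fun w' _ => key w' w)]
  simp [Finset.sum_const, mul_comm, Finset.card_univ]

def pairWord {n : ℕ} (i j : Fin n) : Fin n → ZMod 2 :=
  fun k => if k = i ∨ k = j then 1 else 0

lemma filter_pair {n : ℕ} (i j : Fin n) :
    (univ.filter fun k => k = i ∨ k = j) = {i, j} := by
  ext k; simp [Finset.mem_insert]

lemma wt_pairWord {n : ℕ} {i j : Fin n} (hij : i ≠ j) : wt (pairWord i j) = 2 := by
  have : (univ.filter fun k => pairWord i j k ≠ 0) = {i, j} := by
    rw [← filter_pair i j]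
    apply Finset.filter_congr
    intro k _
    unfold pairWord
    split_ifs with h <;> simp [h]
  rw [wt, this, Finset.card_pair hij]

lemma sum_pairWord {n : ℕ} {i j : Fin n} (hij : i ≠ j) (v : Fin n → ZMod 2) :
    ∑ k, v k * pairWord i j k = v i + v j := by
  have h1 : ∀ k, v k * pairWord i j k = if k = i ∨ k = j then v k else 0 := by
    intro k; unfold pairWord; split_ifs <;> simp
  rw [Finset.sum_congr rfl fun k _ => h1 k, ← Finset.sum_filter, filter_pair,
    Finset.sum_pair hij]

section Main

variable {n : ℕ} (V : Submodule (ZMod 2) (Fin n → ZMod 2))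

/-- evaluation at coordinate `i` as a linear functional on `V`. -/
def evalV (i : Fin n) : V →ₗ[ZMod 2] ZMod 2 :=
  (LinearMap.proj i).comp V.subtype

@[simp] lemma evalV_apply (i : Fin n) (v : V) : evalV V i v = (v : Fin n → ZMod 2) i := rfl

lemma evalV_surj (hspan : Spanning V) (i : Fin n) : Function.Surjective (evalV V i) := by
  obtain ⟨v, hv, hvi⟩ := hspan i
  have h1 : v i = 1 := by
    rcases zmod2_cases (v i) with h | h
    exacts [absurd h hvi, h]
  intro w
  refine ⟨w • ⟨v, hv⟩, ?_⟩
  simp [evalV, h1]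

lemma pair_surj (hspan : Spanning V) (i j : Fin n)
    (h : ∃ v : V, (v : Fin n → ZMod 2) i ≠ (v : Fin n → ZMod 2) j) :
    Function.Surjective ((evalV V i).prod (evalV V j)) := by
  obtain ⟨u, hu⟩ := h
  -- get elements mapping to (1,0) and (0,1)
  have h10 : ∃ a : V, (a : Fin n → ZMod 2) i = 1 ∧ (a : Fin n → ZMod 2) j = 0 := by
    rcases zmod2_cases ((u : Fin n → ZMod 2) i) with h1 | h1 <;>
      rcases zmod2_cases ((u : Fin n → ZMod 2) j) with h2 | h2
    · exact absurd (h1.trans h2.symm) hu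
    · -- u ↦ (0,1); get some a' with a' i = 1
      obtain ⟨a', ha'⟩ := evalV_surj V hspan i 1
      rcases zmod2_cases ((a' : Fin n → ZMod 2) j) with h3 | h3
      · exact ⟨a', ha', h3⟩
      · refine ⟨a' + u, ?_, ?_⟩ <;> simp_all <;> rfl
    · exact ⟨u, h1, h2⟩
    · exact absurd (h1.trans h2.symm) hu
  have h01 : ∃ b : V, (b : Fin n → ZMod 2) i = 0 ∧ (b : Fin n → ZMod 2) j = 1 := by
    obtain ⟨a, ha1, ha2⟩ := h10
    obtain ⟨b', hb'⟩ := evalV_surj V hspan j 1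
    rcases zmod2_cases ((b' : Fin n → ZMod 2) i) with h3 | h3
    · exact ⟨b', h3, hb'⟩
    · refine ⟨b' + a, ?_, ?_⟩ <;> simp_all <;> rfl
  obtain ⟨a, ha1, ha2⟩ := h10
  obtain ⟨b, hb1, hb2⟩ := h01
  intro w
  refine ⟨w.1 • a + w.2 • b, ?_⟩
  have : ∀ z : ZMod 2, z * 1 + 0 = z := by decide
  ext <;> simp [ha1, ha2, hb1, hb2]

end Main

theorem stmt4 {n d : ℕ} (V : Submodule (ZMod 2) (Fin n → ZMod 2)) [Fintype V]
    (hspan : Spanning V) (hd : Module.finrank (ZMod 2) V = d) :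
    ∑ v : V, (wt (v : Fin n → ZMod 2)) ^ 2 =
      2 ^ (d - 1) * ({w | w ∈ dualCode V ∧ wt w = 2}.ncard + n * (n + 1) / 2) := by
  classical
  have cardV : Fintype.card V = 2 ^ d := by
    rw [Module.card_eq_pow_finrank (K := ZMod 2) (V := V), hd, ZMod.card]
  set c : Fin n × Fin n → ℕ := fun p =>
    (univ.filter fun v : V => (v : Fin n → ZMod 2) p.1 = 1 ∧ (v : Fin n → ZMod 2) p.2 = 1).card
    with hc
  set E : Fin n × Fin n → Prop := fun p =>
    ∀ v : V, (v : Fin n → ZMod 2) p.1 = (v : Fin n → ZMod 2) p.2 with hE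
  -- Step 1 : the sum of squared weights is the sum of pair counts
  have hwt : ∀ v : Fin n → ZMod 2, wt v = ∑ i, if v i = 1 then 1 else 0 := by
    intro v
    rw [wt, Finset.card_filter]
    refine Finset.sum_congr rfl fun i _ => ?_
    have h : ∀ z : ZMod 2, (z ≠ 0) ↔ (z = 1) := by decide
    simp only [eq_iff_iff.2 (h (v i))]
  have hS : ∑ v : V, (wt (v : Fin n → ZMod 2)) ^ 2 = ∑ p : Fin n × Fin n, c p := by
    have hv2 : ∀ v : V, (wt (v : Fin n → ZMod 2))^2
        = ∑ p : Fin n × Fin n,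
            (if (v : Fin n → ZMod 2) p.1 = 1 ∧ (v : Fin n → ZMod 2) p.2 = 1 then 1 else 0) := by
      intro v
      rw [sq, hwt, Finset.sum_mul_sum, Fintype.sum_prod_type]
      exact Finset.sum_congr rfl fun i _ => Finset.sum_congr rfl fun j _ => ite_mul_ite' _ _
    rw [Finset.sum_congr rfl fun v _ => hv2 v, Finset.sum_comm]
    exact Finset.sum_congr rfl fun p _ => (Finset.card_filter _ _).symm
  -- Step 2: values of c
  have hval1 : ∀ p : Fin n × Fin n, E p → 1 ≤ d ∧ c p = 2 ^ (d - 1) := by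
    intro p hp
    have h := fiber_card (evalV V p.1) (evalV_surj V hspan p.1) 1
    have hfe : (univ.filter fun v : V => evalV V p.1 v = 1)
        = (univ.filter fun v : V =>
            (v : Fin n → ZMod 2) p.1 = 1 ∧ (v : Fin n → ZMod 2) p.2 = 1) := by
      apply Finset.filter_congr
      intro v _
      simp only [evalV_apply]
      constructor
      · intro h1; exact ⟨h1, (hp v) ▸ h1⟩
      · intro h1; exact h1.1
    rw [hfe, ZMod.card, cardV] at h
    have h2 : c p * 2 ^ 1 = 2 ^ d := by rw [pow_one]; exact h
    exact pow_helper h2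
  have hval2 : ∀ p : Fin n × Fin n, ¬ E p → 2 ≤ d ∧ c p = 2 ^ (d - 2) := by
    intro p hp
    have hp' : ∃ v : V, (v : Fin n → ZMod 2) p.1 ≠ (v : Fin n → ZMod 2) p.2 := by
      by_contra hq
      push_neg at hq
      exact hp fun v => hq v
    have h := fiber_card ((evalV V p.1).prod (evalV V p.2))
      (pair_surj V hspan p.1 p.2 hp') (1, 1)
    have hfe : (univ.filter fun v : V => (evalV V p.1).prod (evalV V p.2) v = (1, 1))
        = (univ.filter fun v : V =>
            (v : Fin n → ZMod 2) p.1 = 1 ∧ (v : Fin n → ZMod 2) p.2 = 1) := by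
      apply Finset.filter_congr
      intro v _
      simp [LinearMap.prod_apply, Prod.ext_iff]
    rw [hfe, Fintype.card_prod, ZMod.card, cardV] at h
    have h2 : c p * 2 ^ 2 = 2 ^ d := by rw [pow_two]; exact h
    exact pow_helper h2
  -- abbreviations for the arithmetic
  set N := n * n with hN
  set M := n * (n + 1) / 2 with hM
  have hNM : 2 * M = N + n := by
    rw [hM, hN, Nat.mul_div_cancel' ((Nat.even_mul_succ_self n).two_dvd)]
    ring
  -- the three classes of pairs
  set D := univ.filter (fun p : Fin n × Fin n => p.1 = p.2) with hDdef
  set P := univ.filter (fun p : Fin n × Fin n => ¬ p.1 = p.2 ∧ E p) with hPdef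
  set Q := univ.filter (fun p : Fin n × Fin n => ¬ p.1 = p.2 ∧ ¬ E p) with hQdef
  have hsplit : ∑ p : Fin n × Fin n, c p = ∑ p ∈ D, c p + (∑ p ∈ P, c p + ∑ p ∈ Q, c p) := by
    rw [← Finset.sum_filter_add_sum_filter_not univ (fun p : Fin n × Fin n => p.1 = p.2) c]
    congr 1
    rw [← Finset.sum_filter_add_sum_filter_not
      (univ.filter (fun p : Fin n × Fin n => ¬ p.1 = p.2)) E c,
      Finset.filter_filter, Finset.filter_filter]
  have hDcard : D.card = n := by
    have hb : D.card = (univ : Finset (Fin n)).card := by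
      apply Finset.card_bij (fun (p : Fin n × Fin n) _ => p.1)
      · intro p hp; exact mem_univ _
      · intro p1 h1 p2 h2 he
        rw [hDdef, Finset.mem_filter] at h1 h2
        rcases p1 with ⟨x1, y1⟩; rcases p2 with ⟨x2, y2⟩
        simp_all
      · intro i _
        refine ⟨(i, i), ?_, rfl⟩
        rw [hDdef, Finset.mem_filter]; exact ⟨mem_univ _, rfl⟩
    rw [hb, Finset.card_univ, Fintype.card_fin]
  have hcards : n + (P.card + Q.card) = N := by
    have h1 := Finset.card_filter_add_card_filter_not
      (s := (univ : Finset (Fin n × Fin n))) (p := fun p => p.1 = p.2)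
    have h2 := Finset.card_filter_add_card_filter_not
      (s := univ.filter (fun p : Fin n × Fin n => ¬ p.1 = p.2)) (p := E)
    rw [Finset.filter_filter, Finset.filter_filter] at h2
    rw [← hDdef] at h1
    rw [← hPdef, ← hQdef] at h2
    rw [Finset.card_univ, Fintype.card_prod, Fintype.card_fin] at h1
    rw [hN, ← h1, hDcard, ← h2]
  -- sums over the classes
  have hDsum : ∑ p ∈ D, c p = n * 2 ^ (d - 1) := by
    have hconst : ∀ p ∈ D, c p = 2 ^ (d - 1) := by
      intro p hp
      rw [hDdef, Finset.mem_filter] at hp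
      exact (hval1 p (fun v => by rw [hp.2])).2
    rw [Finset.sum_congr rfl hconst, Finset.sum_const, smul_eq_mul, hDcard]
  have hPsum : ∑ p ∈ P, c p = P.card * 2 ^ (d - 1) := by
    have hconst : ∀ p ∈ P, c p = 2 ^ (d - 1) := by
      intro p hp
      rw [hPdef, Finset.mem_filter] at hp
      exact (hval1 p hp.2.2).2
    rw [Finset.sum_congr rfl hconst, Finset.sum_const, smul_eq_mul]
  have hQsum : ∑ p ∈ Q, c p = Q.card * 2 ^ (d - 2) := by
    have hconst : ∀ p ∈ Q, c p = 2 ^ (d - 2) := by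
      intro p hp
      rw [hQdef, Finset.mem_filter] at hp
      exact (hval2 p hp.2.2).2
    rw [Finset.sum_congr rfl hconst, Finset.sum_const, smul_eq_mul]
  -- the ordered pairs with equal coordinates, below / above the diagonal
  set A := univ.filter (fun p : Fin n × Fin n => p.1 < p.2 ∧ E p) with hAdef
  set A' := univ.filter (fun p : Fin n × Fin n => p.2 < p.1 ∧ E p) with hA'def
  have hPA : P.card = A.card + A'.card := by
    have h1 := Finset.card_filter_add_card_filter_not
      (s := P) (p := fun p : Fin n × Fin n => p.1 < p.2)
    rw [← h1]
    congr 1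
    · rw [hPdef, Finset.filter_filter, hAdef]
      congr 1
      apply Finset.filter_congr
      intro p _
      constructor
      · rintro ⟨⟨-, he⟩, hlt⟩; exact ⟨hlt, he⟩
      · rintro ⟨hlt, he⟩; exact ⟨⟨ne_of_lt hlt, he⟩, hlt⟩
    · rw [hPdef, Finset.filter_filter, hA'def]
      congr 1
      apply Finset.filter_congr
      intro p _
      constructor
      · rintro ⟨⟨hne, he⟩, hnlt⟩
        exact ⟨lt_of_le_of_ne (not_lt.1 hnlt) (fun h => hne h.symm), he⟩
      · rintro ⟨hlt, he⟩; exact ⟨⟨(ne_of_lt hlt).symm, he⟩, not_lt.2 (le_of_lt hlt)⟩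
  have hA'A : A'.card = A.card := by
    apply Finset.card_bij (fun (p : Fin n × Fin n) _ => (p.2, p.1))
    · intro p hp
      rw [hA'def, Finset.mem_filter] at hp
      rw [hAdef, Finset.mem_filter]
      exact ⟨mem_univ _, hp.2.1, fun v => (hp.2.2 v).symm⟩
    · intro p1 h1 p2 h2 he
      rw [Prod.ext_iff] at he ⊢
      exact ⟨he.2, he.1⟩
    · intro b hb
      rw [hAdef, Finset.mem_filter] at hb
      refine ⟨(b.2, b.1), ?_, rfl⟩
      rw [hA'def, Finset.mem_filter]
      exact ⟨mem_univ _, hb.2.1, fun v => (hb.2.2 v).symm⟩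
  -- weight-2 dual words biject with A
  have hncard : {w | w ∈ dualCode V ∧ wt w = 2}.ncard = A.card := by
    have hset : {w | w ∈ dualCode V ∧ wt w = 2}
        = ↑(univ.filter fun w : Fin n → ZMod 2 => w ∈ dualCode V ∧ wt w = 2) := by
      ext w; simp
    rw [hset, Set.ncard_coe_finset]
    symm
    apply Finset.card_bij (fun (p : Fin n × Fin n) _ => pairWord p.1 p.2)
    · intro p hp
      rw [hAdef, Finset.mem_filter] at hp
      obtain ⟨-, hlt, he⟩ := hp
      have hne : p.1 ≠ p.2 := ne_of_lt hlt
      rw [Finset.mem_filter]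
      refine ⟨mem_univ _, ?_, wt_pairWord hne⟩
      intro v hv
      rw [sum_pairWord hne]
      have := he ⟨v, hv⟩
      simp only at this
      rw [this]
      have hz : ∀ z : ZMod 2, z + z = 0 := by decide
      exact hz _
    · intro p1 h1 p2 h2 he
      rw [hAdef, Finset.mem_filter] at h1 h2
      have hlt1 : (p1.1 : ℕ) < p1.2 := h1.2.1
      have hlt2 : (p2.1 : ℕ) < p2.2 := h2.2.1
      have key : ∀ k, (k = p1.1 ∨ k = p1.2) → (k = p2.1 ∨ k = p2.2) := by
        intro k hk
        by_contra hk2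
        have e1 : pairWord p1.1 p1.2 k = 1 := by simp [pairWord, hk]
        have e2 : pairWord p2.1 p2.2 k = 0 := by simp [pairWord, hk2]
        rw [he] at e1; rw [e1] at e2; exact one_ne_zero e2
      have key' : ∀ k, (k = p2.1 ∨ k = p2.2) → (k = p1.1 ∨ k = p1.2) := by
        intro k hk
        by_contra hk2
        have e1 : pairWord p2.1 p2.2 k = 1 := by simp [pairWord, hk]
        have e2 : pairWord p1.1 p1.2 k = 0 := by simp [pairWord, hk2]
        rw [← he] at e1; rw [e1] at e2; exact one_ne_zero e2
      have m1 : (p1.1 : ℕ) = p2.1 ∨ (p1.1 : ℕ) = p2.2 := by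
        rcases key p1.1 (Or.inl rfl) with h | h <;> simp [h]
      have m2 : (p1.2 : ℕ) = p2.1 ∨ (p1.2 : ℕ) = p2.2 := by
        rcases key p1.2 (Or.inr rfl) with h | h <;> simp [h]
      have m3 : (p2.1 : ℕ) = p1.1 ∨ (p2.1 : ℕ) = p1.2 := by
        rcases key' p2.1 (Or.inl rfl) with h | h <;> simp [h]
      have m4 : (p2.2 : ℕ) = p1.1 ∨ (p2.2 : ℕ) = p1.2 := by
        rcases key' p2.2 (Or.inr rfl) with h | h <;> simp [h]
      have hv1 : (p1.1 : ℕ) = p2.1 := by omega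
      have hv2 : (p1.2 : ℕ) = p2.2 := by omega
      rcases p1 with ⟨x1, y1⟩; rcases p2 with ⟨x2, y2⟩
      simp only [Prod.mk.injEq]
      exact ⟨Fin.val_injective hv1, Fin.val_injective hv2⟩
    · intro b hb
      rw [Finset.mem_filter] at hb
      obtain ⟨-, hdual, hwtb⟩ := hb
      rw [wt] at hwtb
      obtain ⟨i, j, hij, hfil⟩ := Finset.card_eq_two.1 hwtb
      have hmem : ∀ k, b k ≠ 0 ↔ (k = i ∨ k = j) := by
        intro k
        have := Finset.ext_iff.1 hfil k
        simpa using this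
      have hb1 : ∀ k, b k ≠ 0 → b k = 1 := by
        intro k hk
        rcases zmod2_cases (b k) with h | h
        exacts [absurd h hk, h]
      have hbw : ∀ i' j' : Fin n, i' ≠ j' → (∀ k, b k ≠ 0 ↔ (k = i' ∨ k = j')) →
          b = pairWord i' j' := by
        intro i' j' hne hm
        funext k
        unfold pairWord
        split_ifs with h
        · exact hb1 k ((hm k).2 h)
        · by_contra hc
          exact h ((hm k).1 hc)
      have hE' : ∀ i' j' : Fin n, i' ≠ j' → b = pairWord i' j' →
          ∀ v : V, (v : Fin n → ZMod 2) i' = (v : Fin n → ZMod 2) j' := by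
        intro i' j' hne hbeq v
        have := hdual (v : Fin n → ZMod 2) v.2
        rw [hbeq, sum_pairWord hne] at this
        have hz : ∀ x y : ZMod 2, x + y = 0 → x = y := by decide
        exact hz _ _ this
      rcases lt_or_gt_of_ne hij with hlt | hgt
      · refine ⟨(i, j), ?_, (hbw i j hij hmem).symm⟩
        rw [hAdef, Finset.mem_filter]
        exact ⟨mem_univ _, hlt, hE' i j hij (hbw i j hij hmem)⟩
      · have hmem' : ∀ k, b k ≠ 0 ↔ (k = j ∨ k = i) := by
          intro k; rw [hmem k]; tauto
        refine ⟨(j, i), ?_, (hbw j i hij.symm hmem').symm⟩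
        rw [hAdef, Finset.mem_filter]
        exact ⟨mem_univ _, hgt, hE' j i hij.symm (hbw j i hij.symm hmem')⟩
  -- final arithmetic
  rw [hS, hsplit, hDsum, hPsum, hQsum, hncard, hPA, hA'A]
  rcases Finset.eq_empty_or_nonempty Q with hQe | hQne
  · have hQ0 : Q.card = 0 := by rw [hQe]; rfl
    rw [hQ0]
    have hcc : n + 2 * A.card = N := by omega
    have key : n + 2 * A.card = A.card + M := by omega
    simp only [zero_mul, add_zero]
    generalize 2 ^ (d - 1) = x
    calc n * x + (A.card + A.card) * x = (n + 2 * A.card) * x := by ring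
      _ = (A.card + M) * x := by rw [key]
      _ = x * (A.card + M) := by ring
  · obtain ⟨p, hp⟩ := hQne
    rw [hQdef, Finset.mem_filter] at hp
    have hd2 : 2 ≤ d := (hval2 p hp.2.2).1
    have hx : (2:ℕ) ^ (d - 1) = 2 * 2 ^ (d - 2) := by
      rw [← pow_succ']
      congr 1
      omega
    have hcc : n + 2 * A.card + Q.card = N := by omega
    have key : 2 * n + 4 * A.card + Q.card = 2 * (A.card + M) := by omega
    rw [hx]
    generalize 2 ^ (d - 2) = y
    calc n * (2 * y) + ((A.card + A.card) * (2 * y) + Q.card * y)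
        = (2 * n + 4 * A.card + Q.card) * y := by ring
      _ = (2 * (A.card + M)) * y := by rw [key]
      _ = 2 * y * (A.card + M) := by ring
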